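/- Let N be a positive integer and let w ∈ ℝ^{2N+1} have entries w_k = min(k+1, 2N+1−k). For k = 0, …, 2N, let A_k ∈ ℂ^{(N+1)×(N+1)} be the matrix with (i,j)-entry equal to 1/w_k if i+j = k and 0 otherwise. Then: (i) for any z ∈ ℂ^{2N+1}, the weighted Hankel matrix Z with Z_{i,j} = z_{i+j}/w_{i+j} equals Σ_{k=0}^{2N} z_k A_k; (ii) Σ_{k=0}^{2N} A_k A_kᴴ is the diagonal matrix whose (i,i)-entry is Σ_{k=i}^{i+N} w_k^{-2}; and (iii) the spectral norm of Σ_{k=0}^{2N} A_k A_kᴴ equals C_w = max_{0 ≤ i ≤ N} Σ_{k=i}^{i+N} w_k^{-2}. -/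

import Mathlib

open Finset Matrix

/-- The spectral norm (largest singular value) of a complex square matrix,
realized as the operator norm of the induced map on `EuclideanSpace`. -/
noncomputable def specNorm {n : ℕ} (M : Matrix (Fin n) (Fin n) ℂ) : ℝ :=
  ‖Matrix.toEuclideanCLM (𝕜 := ℂ) M‖

/-- The weights `w_k = min(k+1, 2N+1-k)`, i.e. `w = (1,2,…,N+1,N,…,2,1)`. -/
noncomputable def wt (N k : ℕ) : ℝ :=
  min ((k : ℝ) + 1) (2 * (N : ℝ) + 1 - (k : ℝ))

/-- The weighted Hankel matrix of `v ∈ ℂ^{2N+1}`: entries `v_{i+j} / w_{i+j}`. -/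
noncomputable def wHankel (N : ℕ) (v : Fin (2 * N + 1) → ℂ) :
    Matrix (Fin (N + 1)) (Fin (N + 1)) ℂ :=
  Matrix.of fun i j =>
    v ⟨(i : ℕ) + (j : ℕ), by have := i.isLt; have := j.isLt; omega⟩ /
      (wt N ((i : ℕ) + (j : ℕ)) : ℂ)

/-- `C_w = max_{0 ≤ i ≤ N} ∑_{k=i}^{i+N} w_k⁻²`. -/
noncomputable def Cw (N : ℕ) : ℝ :=
  (Finset.range (N + 1)).sup' ⟨0, Finset.mem_range.mpr (Nat.succ_pos N)⟩
    fun i => ∑ k ∈ Finset.Icc i (i + N), ((wt N k)⁻¹) ^ 2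

-- auxiliary: spectral norm of a diagonal matrix
lemma specNorm_diagonal {n : ℕ} (d : Fin (n + 1) → ℂ) :
    specNorm (Matrix.diagonal d) =
      Finset.univ.sup' ⟨0, Finset.mem_univ 0⟩ (fun i => ‖d i‖) := by
  set T := Matrix.toEuclideanCLM (𝕜 := ℂ) (Matrix.diagonal d) with hT
  set M := Finset.univ.sup' ⟨0, Finset.mem_univ 0⟩ (fun i => ‖d i‖) with hM
  have hM0 : 0 ≤ M := le_trans (norm_nonneg (d 0))
    (Finset.le_sup' (fun i : Fin (n+1) => ‖d i‖) (Finset.mem_univ (0 : Fin (n+1))))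
  have hTx : ∀ (x : EuclideanSpace ℂ (Fin (n + 1))) i, T x i = d i * x i := by
    intro x i
    have : (WithLp.equiv 2 _ (T x)) i =
        Matrix.toLin' (Matrix.diagonal d) (WithLp.equiv 2 _ x) i := by
      rw [hT]; rfl
    simpa [Matrix.toLin'_apply, Matrix.mulVec_diagonal] using this
  refine le_antisymm ?_ ?_
  · apply ContinuousLinearMap.opNorm_le_bound _ hM0
    intro x
    rw [EuclideanSpace.norm_eq, EuclideanSpace.norm_eq]
    have h1 : ∑ i, ‖T x i‖ ^ 2 ≤ M ^ 2 * ∑ i, ‖x i‖ ^ 2 := by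
      rw [Finset.mul_sum]
      apply Finset.sum_le_sum
      intro i _
      rw [hTx, norm_mul, mul_pow]
      have : ‖d i‖ ≤ M := Finset.le_sup' (fun j : Fin (n+1) => ‖d j‖) (Finset.mem_univ i)
      have h2 : ‖d i‖ ^ 2 ≤ M ^ 2 := by
        apply pow_le_pow_left₀ (norm_nonneg _) this
      nlinarith [sq_nonneg (‖x i‖)]
    calc Real.sqrt (∑ i, ‖T x i‖ ^ 2) ≤ Real.sqrt (M ^ 2 * ∑ i, ‖x i‖ ^ 2) :=
          Real.sqrt_le_sqrt h1
      _ = M * Real.sqrt (∑ i, ‖x i‖ ^ 2) := by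
          rw [Real.sqrt_mul (sq_nonneg M), Real.sqrt_sq hM0]
  · apply Finset.sup'_le
    intro i _
    have hx : T (EuclideanSpace.single i 1) = EuclideanSpace.single i (d i) := by
      ext j
      rw [hTx]
      by_cases h : j = i <;> simp [EuclideanSpace.single_apply, h]
    have := T.le_opNorm (EuclideanSpace.single i 1)
    rwa [hx, EuclideanSpace.norm_single, EuclideanSpace.norm_single, norm_one,
      mul_one] at this


/-- with `A_k` the matrix supported on the `k`-th anti-diagonal with
entries `1/w_k`, (i) the weighted Hankel matrix of `z` is `∑ₖ zₖ Aₖ`; (ii)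
`∑ₖ Aₖ Aₖᴴ` is diagonal with `(i,i)`-entry `∑_{k=i}^{i+N} w_k⁻²`; and (iii) its
spectral norm is `C_w`. -/
theorem antidiagonal_matrix_series (N : ℕ) (hN : 0 < N)
    (A : Fin (2 * N + 1) → Matrix (Fin (N + 1)) (Fin (N + 1)) ℂ)
    (hA : ∀ (k : Fin (2 * N + 1)) (i j : Fin (N + 1)),
      A k i j = if (i : ℕ) + (j : ℕ) = (k : ℕ) then ((wt N (k : ℕ) : ℂ))⁻¹ else 0) :
    (∀ z : Fin (2 * N + 1) → ℂ, wHankel N z = ∑ k, z k • A k) ∧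
    (∑ k, A k * (A k)ᴴ =
      Matrix.diagonal fun i : Fin (N + 1) =>
        ((∑ k ∈ Finset.Icc (i : ℕ) ((i : ℕ) + N), ((wt N k)⁻¹) ^ 2 : ℝ) : ℂ)) ∧
    specNorm (∑ k, A k * (A k)ᴴ) = Cw N := by
  -- the embedding of antidiagonal index
  have hlt : ∀ (i j : Fin (N + 1)), (i : ℕ) + (j : ℕ) < 2 * N + 1 := by
    intro i j; have := i.isLt; have := j.isLt; omega
  set e : Fin (N + 1) → Fin (N + 1) → Fin (2 * N + 1) :=
    fun i j => ⟨(i : ℕ) + (j : ℕ), hlt i j⟩ with he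
  have hA' : ∀ (k : Fin (2 * N + 1)) (i j : Fin (N + 1)),
      A k i j = if k = e i j then ((wt N ((i : ℕ) + (j : ℕ)) : ℂ))⁻¹ else 0 := by
    intro k i j
    rw [hA]
    by_cases h : (i : ℕ) + (j : ℕ) = (k : ℕ)
    · have hk : k = e i j := by apply Fin.ext; simp [he, h]
      subst hk
      simp [he]
    · have hk : k ≠ e i j := by
        intro hc; apply h; rw [hc]
      simp [h, hk]
  -- part (i)
  have part1 : ∀ z : Fin (2 * N + 1) → ℂ, wHankel N z = ∑ k, z k • A k := by
    intro z
    ext i j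
    rw [Matrix.sum_apply]
    have : ∀ k : Fin (2 * N + 1), (z k • A k) i j =
        if k = e i j then z k * ((wt N ((i : ℕ) + (j : ℕ)) : ℂ))⁻¹ else 0 := by
      intro k
      rw [Matrix.smul_apply, hA', smul_eq_mul, mul_ite, mul_zero]
    rw [Finset.sum_congr rfl (fun k _ => this k), Finset.sum_ite_eq' Finset.univ (e i j)]
    simp [wHankel, he, div_eq_mul_inv]
  -- part (ii)
  have part2 : ∑ k, A k * (A k)ᴴ =
      Matrix.diagonal fun i : Fin (N + 1) =>
        ((∑ k ∈ Finset.Icc (i : ℕ) ((i : ℕ) + N), ((wt N k)⁻¹) ^ 2 : ℝ) : ℂ) := by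
    ext i j
    rw [Matrix.sum_apply]
    have key : ∀ k : Fin (2 * N + 1),
        (A k * (A k)ᴴ) i j = ∑ l, (if k = e i l then ((wt N ((i:ℕ)+(l:ℕ)) : ℂ))⁻¹ else 0) *
          (if k = e j l then ((wt N ((j:ℕ)+(l:ℕ)) : ℂ))⁻¹ else 0) := by
      intro k
      rw [Matrix.mul_apply]
      congr 1; ext l
      rw [Matrix.conjTranspose_apply, hA', hA']
      congr 1
      split <;> simp
    rw [Finset.sum_congr rfl (fun k _ => key k), Finset.sum_comm]
    have inner : ∀ l : Fin (N + 1),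
        (∑ k : Fin (2*N+1), (if k = e i l then ((wt N ((i:ℕ)+(l:ℕ)) : ℂ))⁻¹ else 0) *
          (if k = e j l then ((wt N ((j:ℕ)+(l:ℕ)) : ℂ))⁻¹ else 0)) =
        if i = j then ((wt N ((i:ℕ)+(l:ℕ)) : ℂ))⁻¹ * ((wt N ((i:ℕ)+(l:ℕ)) : ℂ))⁻¹ else 0 := by
      intro l
      have : ∀ k : Fin (2*N+1), (if k = e i l then ((wt N ((i:ℕ)+(l:ℕ)) : ℂ))⁻¹ else 0) *
          (if k = e j l then ((wt N ((j:ℕ)+(l:ℕ)) : ℂ))⁻¹ else 0) =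
          if k = e i l then ((if k = e j l then ((wt N ((j:ℕ)+(l:ℕ)) : ℂ))⁻¹ else 0) *
            ((wt N ((i:ℕ)+(l:ℕ)) : ℂ))⁻¹) else 0 := by
        intro k
        split <;> ring_nf <;> simp
      rw [Finset.sum_congr rfl (fun k _ => this k), Finset.sum_ite_eq' Finset.univ (e i l)]
      simp only [Finset.mem_univ, if_true]
      by_cases hij : i = j
      · subst hij
        simp [mul_comm]
      · have : e i l ≠ e j l := by
          intro hc
          apply hij
          apply Fin.ext
          have : (i:ℕ) + (l:ℕ) = (j:ℕ) + (l:ℕ) := by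
            have := congrArg Fin.val hc
            simpa [he] using this
          omega
        simp [this, hij]
    rw [Finset.sum_congr rfl (fun l _ => inner l)]
    by_cases hij : i = j
    · subst hij
      simp only [if_true, Matrix.diagonal_apply_eq]
      rw [Complex.ofReal_sum]
      have hset : Finset.Icc (i:ℕ) ((i:ℕ)+N) =
          (Finset.range (N+1)).map ⟨fun l => (i:ℕ)+l, add_right_injective _⟩ := by
        ext k
        simp only [Finset.mem_Icc, Finset.mem_map, Finset.mem_range,
          Function.Embedding.coeFn_mk]
        constructor
        · intro hk; exact ⟨k - (i:ℕ), by omega, by omega⟩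
        · rintro ⟨a, ha, rfl⟩; omega
      rw [hset, Finset.sum_map,
        Fin.sum_univ_eq_sum_range
          (fun l => ((wt N ((i:ℕ)+l) : ℂ))⁻¹ * ((wt N ((i:ℕ)+l) : ℂ))⁻¹) (N+1)]
      apply Finset.sum_congr rfl
      intro l _
      simp only [Function.Embedding.coeFn_mk]
      push_cast
      ring
    · simp [hij, Matrix.diagonal_apply_ne _ hij]
  refine ⟨part1, part2, ?_⟩
  -- part (iii)
  rw [part2, specNorm_diagonal]
  have hnn : ∀ i : Fin (N + 1),
      (0:ℝ) ≤ ∑ k ∈ Finset.Icc (i : ℕ) ((i : ℕ) + N), ((wt N k)⁻¹) ^ 2 := by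
    intro i
    apply Finset.sum_nonneg
    intro k _
    positivity
  have hnorm : ∀ i : Fin (N + 1),
      ‖((∑ k ∈ Finset.Icc (i : ℕ) ((i : ℕ) + N), ((wt N k)⁻¹) ^ 2 : ℝ) : ℂ)‖ =
        ∑ k ∈ Finset.Icc (i : ℕ) ((i : ℕ) + N), ((wt N k)⁻¹) ^ 2 := by
    intro i
    rw [Complex.norm_real, Real.norm_of_nonneg (hnn i)]
  simp only [hnorm]
  simp only [Cw]
  apply le_antisymm
  · apply Finset.sup'_le
    intro i _
    exact Finset.le_sup' (fun i : ℕ => ∑ k ∈ Finset.Icc i (i + N), ((wt N k)⁻¹) ^ 2)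
      (Finset.mem_range.mpr i.isLt)
  · apply Finset.sup'_le
    intro i hi
    rw [Finset.mem_range] at hi
    exact Finset.le_sup' (α := ℝ)
      (fun j : Fin (N+1) => ∑ k ∈ Finset.Icc (j : ℕ) ((j : ℕ) + N), ((wt N k)⁻¹) ^ 2)
      (Finset.mem_univ (⟨i, hi⟩ : Fin (N+1)))
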